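/- Let q be odd and γ a b-linear translator of f : F_{q^n} → F_q. Then F(x) = x + γ·f(x) is a complete mapping of F_{q^n} (i.e., both F and x ↦ F(x) + x are bijections) if and only if b ∉ {-1, -2}. -/

import Mathlib

/-- For `q` odd and `γ` a `b`-linear translator of `f`, the map `F(x) = x + γ f(x)`
is a complete mapping iff `b ∉ {-1, -2}`. -/
theorem stmt_11 {K L : Type*} [Field K] [Fintype K] [Field L] [Fintype L] [Algebra K L]
    (hq : Odd (Fintype.card K))
    (f : L → K) (γ : L) (b : K)
    (hγ0 : γ ≠ 0)
    (hb : ∀ (x : L) (u : K), f (x + u • γ) - f x = u * b) :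
    (Function.Bijective (fun x : L => x + f x • γ) ∧
      Function.Bijective (fun x : L => (x + f x • γ) + x)) ↔
      (b ≠ -1 ∧ b ≠ -2) := by
  classical
  have h2 : (2 : K) ≠ 0 := by
    intro h
    have hdvd : ringChar K ∣ 2 := by
      have : ((2 : ℕ) : K) = 0 := by exact_mod_cast h
      exact (CharP.cast_eq_zero_iff K (ringChar K) 2).mp this
    have hchar : ringChar K = 2 :=
      ((Nat.dvd_prime Nat.prime_two).mp hdvd).resolve_left CharP.ringChar_ne_one
    have := FiniteField.even_card_of_char_two hchar
    rw [Nat.odd_iff] at hq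
    omega
  -- key lemma: for c ≠ 0, the map x ↦ c•x + f(x)•γ is injective iff b ≠ -c
  have key : ∀ c : K, c ≠ 0 →
      (Function.Injective
        (fun x : L => algebraMap K L c * x + algebraMap K L (f x) * γ) ↔ b ≠ -c) := by
    intro c hc
    have hgc : algebraMap K L c ≠ 0 := by
      simpa using hc
    constructor
    · intro hinj hbc
      have hfγ : f γ = f 0 + b := by
        have h0 := hb 0 1
        rw [zero_add, one_smul, one_mul] at h0
        linear_combination h0
      have he : (fun x : L => algebraMap K L c * x + algebraMap K L (f x) * γ) γ =
          (fun x : L => algebraMap K L c * x + algebraMap K L (f x) * γ) 0 := by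
        simp only [hfγ, hbc, map_add, map_neg]
        ring
      exact hγ0 (hinj he)
    · intro hbc x y h
      simp only at h
      set u := c⁻¹ * (f y - f x) with hu
      have hcu : c * u = f y - f x := by
        rw [hu, ← mul_assoc, mul_inv_cancel₀ hc, one_mul]
      have hxy : x = y + algebraMap K L u * γ := by
        apply mul_left_cancel₀ hgc
        have hgu : algebraMap K L c * algebraMap K L u =
            algebraMap K L (f y) - algebraMap K L (f x) := by
          rw [← map_mul, hcu, map_sub]
        linear_combination h - hgu * γ
      have hfx : f x - f y = u * b := by
        have h3 := hb y u
        rw [Algebra.smul_def, ← hxy] at h3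
        exact h3
      have hu0 : u = 0 := by
        rcases mul_eq_zero.mp (show u * (b + c) = 0 by linear_combination hcu - hfx)
          with h' | h'
        · exact h'
        · exact absurd (by linear_combination h') hbc
      rw [hxy, hu0, map_zero, zero_mul, add_zero]
  have e1 : (fun x : L => x + f x • γ) =
      (fun x : L => algebraMap K L (1 : K) * x + algebraMap K L (f x) * γ) := by
    funext x
    rw [map_one, one_mul, Algebra.smul_def]
  have e2 : (fun x : L => (x + f x • γ) + x) =
      (fun x : L => algebraMap K L (2 : K) * x + algebraMap K L (f x) * γ) := by
    funext x
    rw [Algebra.smul_def, map_ofNat]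
    ring
  rw [e1, e2, ← Finite.injective_iff_bijective, ← Finite.injective_iff_bijective,
    key 1 one_ne_zero, key 2 h2]
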